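/- Let d ≥ 1 and work in ℝ^d with the Euclidean (l_2) norm. Let B_c be the closed ball with center y_0 and radius ρ > 0, and for j = 1,…,k let B_j be the closed ball with center a_j and radius b_j > 0; let S_c, S_1,…,S_k denote the corresponding spheres (boundaries). Suppose P ⊆ ℝ^d satisfies: for every subset F of the index set {c, 1,…,k} with |F| ≤ d, (i) if the intersection of the spheres ⋂_{j∈F} S_j is nonempty and connected then P contains a point of ⋂_{j∈F} S_j, and (ii) if ⋂_{j∈F} S_j contains at most two points then ⋂_{j∈F} S_j ⊆ P. Then for every subset {i_1,…,i_r} ⊆ {1,…,k}: if there exists x ∈ B_c with x not in the open ball int B_j for all j ∈ {i_1,…,i_r}, then there exists p ∈ P with p ∈ B_c and p not in the open ball int B_j for all j ∈ {i_1,…,i_r}. -/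

import Mathlib

open Metric Module Set
open scoped RealInnerProductSpace


variable {E : Type*} [NormedAddCommGroup E] [InnerProductSpace ℝ E]

/-- A sphere inside an affine subspace `c +ᵥ V`, with center `c` and radius `r`. -/
def affSphere (V : Submodule ℝ E) (c : E) (r : ℝ) : Set E :=
  {x | x - c ∈ V ∧ ‖x - c‖ = r}

lemma sphere_eq_affSphere (c : E) (r : ℝ) : Metric.sphere c r = affSphere ⊤ c r := by
  ext x; simp [affSphere, dist_eq_norm]

lemma affSphere_subset_pair [FiniteDimensional ℝ E] {V : Submodule ℝ E} {c : E} {r : ℝ}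
    (h : finrank ℝ V ≤ 1 ∨ r = 0) :
    ∃ u w : E, affSphere V c r ⊆ {u, w} := by
  rcases h with h | rfl
  swap
  · refine ⟨c, c, fun x hx => ?_⟩
    have : x - c = 0 := by simpa using hx.2
    simp [sub_eq_zero.mp this]
  · rcases Nat.le_one_iff_eq_zero_or_eq_one.mp h with h | h
    · refine ⟨c, c, fun x hx => ?_⟩
      have hV : V = ⊥ := Submodule.finrank_eq_zero.mp h
      have : x - c = 0 := by simpa [hV] using hx.1
      simp [sub_eq_zero.mp this]
    · obtain ⟨v, hv0, hv⟩ := finrank_eq_one_iff'.mp h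
      refine ⟨c + (r / ‖(v:E)‖) • (v:E), c - (r / ‖(v:E)‖) • (v:E), fun x hx => ?_⟩
      obtain ⟨s, hs⟩ := hv ⟨x - c, hx.1⟩
      have hs' : x - c = s • (v : E) := by
        have := congrArg (Subtype.val) hs; simpa using this.symm
      have hvn : ‖(v:E)‖ ≠ 0 := by
        simpa using fun h => hv0 (Subtype.ext (by simpa using h))
      have hns : |s| * ‖(v:E)‖ = r := by
        have := hx.2; rw [hs'] at this; simpa [norm_smul, abs_mul] using this
      have habs : |s| = r / ‖(v:E)‖ := by field_simp [hvn] at *; linarith [hns]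
      rcases abs_eq (by rw [← habs]; exact abs_nonneg s) |>.mp habs with h1 | h1
      · left
        have : x = c + s • (v:E) := by rw [← hs']; abel
        rw [this, h1]
      · right
        have : x = c + s • (v:E) := by rw [← hs']; abel
        rw [this, h1]
        simp [sub_eq_add_neg, neg_smul]

lemma isConnected_affSphere [FiniteDimensional ℝ E] {V : Submodule ℝ E}
    (h2 : 2 ≤ finrank ℝ V) (c : E) {r : ℝ} (hr : 0 ≤ r) :
    IsConnected (affSphere V c r) := by
  have himg : affSphere V c r = (fun v : V => c + (v : E)) '' Metric.sphere 0 r := by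
    ext x
    constructor
    · rintro ⟨hx, hn⟩
      exact ⟨⟨x - c, hx⟩, by simpa [dist_eq_norm] using hn, by simp⟩
    · rintro ⟨v, hv, rfl⟩
      refine ⟨by simpa using v.2, ?_⟩
      simpa [dist_eq_norm] using hv
  rw [himg]
  have hrank : 1 < Module.rank ℝ V := by
    rw [← finrank_eq_rank]
    exact_mod_cast h2
  exact (isConnected_sphere hrank 0 hr).image _
    (continuous_const.add continuous_subtype_val).continuousOn




lemma affSphere_inter_sphere [FiniteDimensional ℝ E] {V : Submodule ℝ E} {c : E} {r : ℝ}
    (hr : 0 ≤ r) (α : E) (β : ℝ)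
    (hy : (affSphere V c r ∩ Metric.sphere α β).Nonempty)
    (hz : ∃ z ∈ affSphere V c r, z ∉ Metric.sphere α β) :
    ∃ (V' : Submodule ℝ E) (c' : E) (r' : ℝ), V' < V ∧ 0 ≤ r' ∧
      affSphere V c r ∩ Metric.sphere α β = affSphere V' c' r' := by
  classical
  set w : E := ((V.orthogonalProjectionOnto (c - α) : V) : E) with hw
  have hwV : w ∈ V := SetLike.coe_mem _
  have hproj : ∀ v ∈ V, ⟪v, c - α⟫ = ⟪v, w⟫ := by
    intro v hv
    have hmem : (c - α) - w ∈ Vᗮ := Submodule.sub_starProjection_mem_orthogonal (K := V) (c - α)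
    have h' := hmem v hv
    rw [inner_sub_right] at h'
    linarith
  clear_value w
  set t : ℝ := (β ^ 2 - r ^ 2 - ‖c - α‖ ^ 2) / 2 with ht
  -- membership characterization
  have hchar : ∀ x ∈ affSphere V c r,
      (x ∈ Metric.sphere α β ↔ ⟪x - c, w⟫ = t) := by
    intro x hx
    have hβ' : 0 ≤ β := by
      obtain ⟨y, _, hy2⟩ := hy
      have : dist y α = β := hy2
      linarith [dist_nonneg (x := y) (y := α)]
    have hexp : ‖x - α‖ ^ 2 = r ^ 2 + 2 * ⟪x - c, c - α⟫ + ‖c - α‖ ^ 2 := by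
      have h9 : x - α = (x - c) + (c - α) := by abel
      rw [h9, norm_add_sq_real, hx.2]
    constructor
    · intro hs
      have hd : ‖x - α‖ = β := by rwa [mem_sphere_iff_norm] at hs
      have h8 := hproj (x - c) hx.1
      rw [← h8, ht]
      nlinarith [hexp, hd]
    · intro hinner
      have h8 := hproj (x - c) hx.1
      rw [← h8] at hinner
      have hnorm2 : ‖x - α‖ ^ 2 = β ^ 2 := by
        rw [ht] at hinner; nlinarith [hexp]
      have : ‖x - α‖ = β := by
        nlinarith [norm_nonneg (x - α), hβ']
      rwa [mem_sphere_iff_norm]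
  clear_value t
  have hwne : w ≠ 0 := by
    by_contra hw0
    obtain ⟨z, hzM, hzS⟩ := hz
    obtain ⟨y, hyM, hyS⟩ := hy
    have hty : t = 0 := by
      have h7 := (hchar y hyM).mp hyS
      rw [hw0, inner_zero_right] at h7
      linarith
    exact hzS ((hchar z hzM).mpr (by rw [hw0, inner_zero_right, hty]))
  have hwn : (0:ℝ) < ‖w‖ := norm_pos_iff.mpr hwne
  set s0 : ℝ := t / ‖w‖ ^ 2 with hs0
  set c' : E := c + s0 • w with hc'
  set V' : Submodule ℝ E := V ⊓ (ℝ ∙ w)ᗮ with hV'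
  have hVlt : V' < V := by
    refine lt_of_le_of_ne inf_le_left (fun hEq => ?_)
    have hwV' : w ∈ V' := hEq.symm ▸ hwV
    have h6 : ⟪w, w⟫ = 0 :=
      Submodule.mem_orthogonal_singleton_iff_inner_right.mp (Submodule.mem_inf.mp hwV').2
    exact hwne (inner_self_eq_zero.mp h6)
  clear_value s0 c' V'
  obtain ⟨y, hyM, hyS⟩ := hy
  have hyt : ⟪y - c, w⟫ = t := (hchar y hyM).mp hyS
  have hCS : t ^ 2 ≤ r ^ 2 * ‖w‖ ^ 2 := by
    have h3 : |t| ≤ r * ‖w‖ := by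
      rw [← hyt]
      calc |⟪y - c, w⟫| ≤ ‖y - c‖ * ‖w‖ := abs_real_inner_le_norm _ _
        _ = r * ‖w‖ := by rw [hyM.2]
    have h4 := pow_le_pow_left₀ (abs_nonneg t) h3 2
    rw [sq_abs] at h4
    calc t ^ 2 ≤ (r * ‖w‖) ^ 2 := h4
      _ = r ^ 2 * ‖w‖ ^ 2 := by ring
  have hr2 : 0 ≤ r ^ 2 - t ^ 2 / ‖w‖ ^ 2 := by
    rw [sub_nonneg, div_le_iff₀ (by positivity)]
    linarith
  set r' : ℝ := Real.sqrt (r ^ 2 - t ^ 2 / ‖w‖ ^ 2) with hr'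
  have hr'0 : 0 ≤ r' := Real.sqrt_nonneg _
  have hr'sq : r' ^ 2 = r ^ 2 - t ^ 2 / ‖w‖ ^ 2 := Real.sq_sqrt hr2
  clear_value r'
  refine ⟨V', c', r', hVlt, hr'0, ?_⟩
  ext x
  constructor
  · rintro ⟨hxM, hxS⟩
    have hxt : ⟪x - c, w⟫ = t := (hchar x hxM).mp hxS
    have hxc' : x - c' = (x - c) - s0 • w := by rw [hc']; abel
    have hmem1 : x - c' ∈ V := by
      rw [hxc']; exact V.sub_mem hxM.1 (V.smul_mem _ hwV)
    have hmem2 : x - c' ∈ (ℝ ∙ w)ᗮ := by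
      rw [Submodule.mem_orthogonal_singleton_iff_inner_right, real_inner_comm, hxc',
        inner_sub_left, hxt, real_inner_smul_left, real_inner_self_eq_norm_sq, hs0]
      field_simp
      ring
    refine ⟨by rw [hV']; exact Submodule.mem_inf.mpr ⟨hmem1, hmem2⟩, ?_⟩
    · have h5 : ‖x - c'‖ ^ 2 = r' ^ 2 := by
        rw [hxc', norm_sub_sq_real, real_inner_smul_right, hxt, norm_smul, hxM.2, hr'sq,
          Real.norm_eq_abs, mul_pow, sq_abs, hs0]
        field_simp
        ring
      have h6 := congrArg Real.sqrt h5
      rwa [Real.sqrt_sq (norm_nonneg _), Real.sqrt_sq hr'0] at h6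
  · rintro ⟨hxV', hn⟩
    rw [hV'] at hxV'
    obtain ⟨hv'V, hv'o⟩ := Submodule.mem_inf.mp hxV'
    have hwo : ⟪x - c', w⟫ = 0 := by
      have h2 := Submodule.mem_orthogonal_singleton_iff_inner_right.mp hv'o
      rwa [real_inner_comm]
    have hxc : x - c = (x - c') + s0 • w := by rw [hc']; abel
    have hxV : x - c ∈ V := by
      rw [hxc]; exact V.add_mem hv'V (V.smul_mem _ hwV)
    have hinner : ⟪x - c, w⟫ = t := by
      rw [hxc, inner_add_left, real_inner_smul_left, hwo, real_inner_self_eq_norm_sq, hs0]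
      field_simp
      ring
    have hnorm : ‖x - c‖ ^ 2 = r ^ 2 := by
      rw [hxc, norm_add_sq_real, hn, real_inner_smul_right, hwo, hr'sq, norm_smul,
        mul_pow, Real.norm_eq_abs, sq_abs, hs0]
      field_simp
      ring
    have hnr : ‖x - c‖ = r := by
      have h6 := congrArg Real.sqrt hnorm
      rwa [Real.sqrt_sq (norm_nonneg _), Real.sqrt_sq hr] at h6
    exact ⟨⟨hxV, hnr⟩, (hchar x ⟨hxV, hnr⟩).mpr hinner⟩


lemma exists_boundary_index {α : Type*} [TopologicalSpace α] {ι : Type*} [DecidableEq ι]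
    {M : Set α} (hM : IsPreconnected M)
    (F : Finset ι) (C : ι → Set α) (hC : ∀ i ∈ F, IsClosed (C i))
    (h1 : (M ∩ ⋂ i ∈ F, C i).Nonempty) (h2 : ¬ M ⊆ ⋂ i ∈ F, C i) :
    ∃ y ∈ M ∩ ⋂ i ∈ F, C i, ∃ i ∈ F, y ∈ closure (M \ C i) := by
  by_contra hcon
  push_neg at hcon
  set u : Set α := ⋂ i ∈ F, (closure (M \ C i))ᶜ with hu
  set v : Set α := ⋃ i ∈ F, (C i)ᶜ with hv
  have huo : IsOpen u := isOpen_biInter_finset fun i _ => isClosed_closure.isOpen_compl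
  have hvo : IsOpen v := isOpen_biUnion fun i hi => (hC i hi).isOpen_compl
  have hsub : M ⊆ u ∪ v := by
    intro y hy
    by_cases hyK : y ∈ ⋂ i ∈ F, C i
    · left
      rw [hu, mem_iInter₂]
      intro i hi
      exact hcon y ⟨hy, hyK⟩ i hi
    · right
      rw [mem_iInter₂] at hyK
      push_neg at hyK
      obtain ⟨i, hi, hyi⟩ := hyK
      exact mem_biUnion hi hyi
  have hnu : (M ∩ u).Nonempty := by
    obtain ⟨y, hyM, hyK⟩ := h1
    refine ⟨y, hyM, ?_⟩
    rw [hu, mem_iInter₂]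
    intro i hi
    exact hcon y ⟨hyM, hyK⟩ i hi
  have hnv : (M ∩ v).Nonempty := by
    rw [not_subset] at h2
    obtain ⟨z, hzM, hzK⟩ := h2
    rw [mem_iInter₂] at hzK
    push_neg at hzK
    obtain ⟨i, hi, hzi⟩ := hzK
    exact ⟨z, hzM, mem_biUnion hi hzi⟩
  obtain ⟨y, hyM, hyu, hyv⟩ := hM u v huo hvo hsub hnu hnv
  rw [hv, mem_iUnion₂] at hyv
  obtain ⟨i, hi, hyi⟩ := hyv
  rw [hu, mem_iInter₂] at hyu
  exact hyu i hi (subset_closure ⟨hyM, hyi⟩)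



/-- Lemma on representative points of intersections of spheres (avoid-ball lemma).
In `ℝ^d` with the Euclidean norm, let `B_c` be the closed ball of center `y₀` and
radius `ρ > 0` and let `B_j` (`j ∈ {1,…,k}`) be closed balls of centers `a j` and radii
`b j > 0`; the spheres are indexed by `Option (Fin k)`, with `none` corresponding to the
boundary `S_c` of `B_c` and `some j` to the boundary `S_j` of `B_j`.  Suppose
`P ⊆ ℝ^d` satisfies: for every index set `F` with `|F| ≤ d`,
(i) if `⋂_{o ∈ F} S_o` is nonempty and connected, then `P` contains one of its points;
(ii) if `⋂_{o ∈ F} S_o` has at most two points, then it is contained in `P`.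
Then for every subset `T ⊆ {1,…,k}`: if some `x ∈ B_c` lies outside the open balls
`int B_j` for all `j ∈ T`, then some `p ∈ P` lies in `B_c` and outside all those open
balls. -/
theorem stmt_8 (d k : ℕ) (hd : 1 ≤ d)
    (y₀ : EuclideanSpace ℝ (Fin d)) (ρ : ℝ) (hρ : 0 < ρ)
    (a : Fin k → EuclideanSpace ℝ (Fin d)) (b : Fin k → ℝ) (hb : ∀ j, 0 < b j)
    (P : Set (EuclideanSpace ℝ (Fin d)))
    (Sph : Option (Fin k) → Set (EuclideanSpace ℝ (Fin d)))
    (hSph : Sph = fun o =>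
      o.elim (Metric.sphere y₀ ρ) fun j => Metric.sphere (a j) (b j))
    (hP1 : ∀ F : Finset (Option (Fin k)), F.card ≤ d →
      IsConnected (⋂ o ∈ F, Sph o) → (P ∩ ⋂ o ∈ F, Sph o).Nonempty)
    (hP2 : ∀ F : Finset (Option (Fin k)), F.card ≤ d →
      (∃ u w : EuclideanSpace ℝ (Fin d), (⋂ o ∈ F, Sph o) ⊆ {u, w}) →
      (⋂ o ∈ F, Sph o) ⊆ P)
    (T : Finset (Fin k))
    (hx : ∃ x ∈ Metric.closedBall y₀ ρ, ∀ j ∈ T, x ∉ Metric.ball (a j) (b j)) :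
    ∃ p ∈ P, p ∈ Metric.closedBall y₀ ρ ∧ ∀ j ∈ T, p ∉ Metric.ball (a j) (b j) := by
  classical
  set C : Option (Fin k) → Set (EuclideanSpace ℝ (Fin d)) :=
    fun o => o.elim (Metric.closedBall y₀ ρ) (fun j => (Metric.ball (a j) (b j))ᶜ) with hC
  set FT : Finset (Option (Fin k)) := insert none (T.image some) with hFT
  set K : Set (EuclideanSpace ℝ (Fin d)) := ⋂ o ∈ FT, C o with hK
  have hCclosed : ∀ o ∈ FT, IsClosed (C o) := by
    intro o _
    cases o with
    | none => exact Metric.isClosed_closedBall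
    | some j => exact Metric.isOpen_ball.isClosed_compl
  -- specification of boundary points
  have spec : ∀ (M : Set (EuclideanSpace ℝ (Fin d))) (y : EuclideanSpace ℝ (Fin d)),
      y ∈ K → ∀ o ∈ FT, y ∈ closure (M \ C o) →
      ∃ α β, 0 < β ∧ Sph o = Metric.sphere α β ∧ y ∈ Sph o ∧ ∃ z ∈ M, z ∉ Sph o := by
    intro M y hyK o ho hycl
    have hne : (M \ C o).Nonempty := by
      rcases (M \ C o).eq_empty_or_nonempty with h | h
      · rw [h, closure_empty] at hycl; exact absurd hycl (notMem_empty _)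
      · exact h
    obtain ⟨z, hzM, hzC⟩ := hne
    rw [hK] at hyK
    have hyCo : y ∈ C o := mem_iInter₂.mp hyK o ho
    cases o with
    | none =>
      have hsub : M \ C none ⊆ (Metric.ball y₀ ρ)ᶜ := by
        intro u hu hub
        exact hu.2 (Metric.ball_subset_closedBall hub)
      have hyc : y ∈ (Metric.ball y₀ ρ)ᶜ :=
        closure_minimal hsub Metric.isOpen_ball.isClosed_compl hycl
      have hge : ρ ≤ dist y y₀ := by
        by_contra hlt
        exact hyc (Metric.mem_ball.mpr (by linarith))
      have hle : dist y y₀ ≤ ρ := hyCo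
      refine ⟨y₀, ρ, hρ, by simp [hSph], ?_, z, hzM, ?_⟩
      · rw [hSph]
        exact le_antisymm hle hge
      · rw [hSph]
        intro hzs
        have : dist z y₀ = ρ := hzs
        exact hzC (Metric.mem_closedBall.mpr (le_of_eq this))
    | some j =>
      have hsub : M \ C (some j) ⊆ Metric.ball (a j) (b j) := by
        intro u hu
        by_contra hub
        exact hu.2 hub
      have hyc : y ∈ Metric.closedBall (a j) (b j) :=
        closure_minimal (hsub.trans Metric.ball_subset_closedBall) Metric.isClosed_closedBall hycl
      have hge : b j ≤ dist y (a j) := by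
        by_contra hlt
        exact hyCo (Metric.mem_ball.mpr (by linarith))
      refine ⟨a j, b j, hb j, by simp [hSph], ?_, z, hzM, ?_⟩
      · rw [hSph]
        exact le_antisymm hyc hge
      · rw [hSph]
        intro hzs
        have h1 : dist z (a j) = b j := hzs
        have h2 : z ∈ Metric.ball (a j) (b j) := not_not.mp (fun h => hzC h)
        rw [Metric.mem_ball] at h2
        linarith
  -- the key induction on the dimension of the current intersection sphere
  have key : ∀ n (V : Submodule ℝ (EuclideanSpace ℝ (Fin d)))
      (c : EuclideanSpace ℝ (Fin d)) (r : ℝ) (F : Finset (Option (Fin k))),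
      finrank ℝ V ≤ n → 0 ≤ r → (⋂ o ∈ F, Sph o) = affSphere V c r →
      F.card ≤ d → F.card + finrank ℝ V ≤ d + 1 →
      (affSphere V c r ∩ K).Nonempty → (P ∩ K).Nonempty := by
    intro n
    induction n using Nat.strong_induction_on with
    | _ n IH =>
      intro V c r F hn hr0 hF hcard hsum hne
      by_cases hsmall : finrank ℝ V ≤ 1 ∨ r = 0
      · obtain ⟨u, w, huw⟩ := affSphere_subset_pair hsmall (c := c) (r := r)
        have hsubP : (⋂ o ∈ F, Sph o) ⊆ P := hP2 F hcard ⟨u, w, by rw [hF]; exact huw⟩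
        obtain ⟨y, hyM, hyK⟩ := hne
        exact ⟨y, hsubP (by rw [hF]; exact hyM), hyK⟩
      · push_neg at hsmall
        have h2 : 2 ≤ finrank ℝ V := by omega
        have hconn : IsConnected (affSphere V c r) := isConnected_affSphere h2 c hr0
        by_cases hMK : affSphere V c r ⊆ K
        · obtain ⟨p, hpP, hpM⟩ := hP1 F hcard (by rw [hF]; exact hconn)
          rw [hF] at hpM
          exact ⟨p, hpP, hMK hpM⟩
        · have hKset : ¬ affSphere V c r ⊆ ⋂ o ∈ FT, C o := by rwa [← hK]
          obtain ⟨y, hyMK, o, ho, hycl⟩ :=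
            exists_boundary_index hconn.isPreconnected FT C hCclosed
              (by rw [← hK]; exact hne) hKset
          have hyK : y ∈ K := by rw [hK]; exact hyMK.2
          obtain ⟨α, β, hβ, hSo, hySph, z, hzM, hzSph⟩ := spec _ y hyK o ho hycl
          have hoF : o ∉ F := by
            intro hoF
            have hzI : z ∈ ⋂ o' ∈ F, Sph o' := by rw [hF]; exact hzM
            exact hzSph (mem_iInter₂.mp hzI o hoF)
          have hyA : y ∈ affSphere V c r := hyMK.1
          have hyS : y ∈ Metric.sphere α β := by rw [← hSo]; exact hySph
          have hzS : z ∉ Metric.sphere α β := by rw [← hSo]; exact hzSph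
          obtain ⟨V', c', r', hVlt, hr'0, heq⟩ :=
            affSphere_inter_sphere hr0 α β ⟨y, hyA, hyS⟩ ⟨z, hzM, hzS⟩
          have hflt : finrank ℝ V' < finrank ℝ V := Submodule.finrank_lt_finrank_of_lt hVlt
          refine IH (finrank ℝ V') (by omega) V' c' r' (insert o F) le_rfl hr'0 ?_ ?_ ?_ ?_
          · rw [Finset.set_biInter_insert, hF, hSo, Set.inter_comm, heq]
          · rw [Finset.card_insert_of_notMem hoF]; omega
          · rw [Finset.card_insert_of_notMem hoF]; omega
          · refine ⟨y, ?_, hyK⟩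
            rw [← heq]
            exact ⟨hyA, hyS⟩
  -- entry point
  have hdim : finrank ℝ (⊤ : Submodule ℝ (EuclideanSpace ℝ (Fin d))) = d := by
    rw [finrank_top]; exact finrank_euclideanSpace_fin
  obtain ⟨x, hx1, hx2⟩ := hx
  have hxK : x ∈ K := by
    rw [hK, mem_iInter₂]
    intro o ho
    rw [hFT] at ho
    rcases Finset.mem_insert.mp ho with rfl | ho
    · exact hx1
    · obtain ⟨j, hj, rfl⟩ := Finset.mem_image.mp ho
      exact hx2 j hj
  have hout : y₀ + (ρ + 1) • EuclideanSpace.single (⟨0, hd⟩ : Fin d) (1:ℝ) ∉ K := by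
    intro hmem
    rw [hK] at hmem
    have h1 : y₀ + (ρ+1) • EuclideanSpace.single (⟨0, hd⟩ : Fin d) (1:ℝ) ∈ C none :=
      mem_iInter₂.mp hmem none (by rw [hFT]; exact Finset.mem_insert_self _ _)
    have h2 : dist (y₀ + (ρ+1) • EuclideanSpace.single (⟨0, hd⟩ : Fin d) (1:ℝ)) y₀ ≤ ρ := h1
    rw [dist_eq_norm] at h2
    have h3 : y₀ + (ρ+1) • EuclideanSpace.single (⟨0, hd⟩ : Fin d) (1:ℝ) - y₀
        = (ρ+1) • EuclideanSpace.single (⟨0, hd⟩ : Fin d) (1:ℝ) := by abel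
    rw [h3, norm_smul] at h2
    have h4 : ‖EuclideanSpace.single (⟨0, hd⟩ : Fin d) (1:ℝ)‖ = 1 := by simp
    rw [h4, mul_one, Real.norm_eq_abs, abs_of_pos (by linarith)] at h2
    linarith
  have hMnK : ¬ (univ : Set (EuclideanSpace ℝ (Fin d))) ⊆ ⋂ o ∈ FT, C o := by
    intro h
    exact hout (by rw [hK]; exact h (mem_univ _))
  obtain ⟨y, hyMK, o, ho, hycl⟩ :=
    exists_boundary_index isPreconnected_univ FT C hCclosed
      ⟨x, mem_univ _, by rw [← hK]; exact hxK⟩ hMnK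
  have hyK : y ∈ K := by rw [hK]; exact hyMK.2
  obtain ⟨α, β, hβ, hSo, hySph, -⟩ := spec univ y hyK o ho hycl
  have hPK : (P ∩ K).Nonempty := by
    refine key d ⊤ α β {o} (by rw [hdim]) (le_of_lt hβ) ?_ ?_ ?_ ?_
    · rw [Finset.set_biInter_singleton, hSo, sphere_eq_affSphere]
    · rw [Finset.card_singleton]; omega
    · rw [Finset.card_singleton, hdim]; omega
    · refine ⟨y, ?_, hyK⟩
      rw [← sphere_eq_affSphere, ← hSo]
      exact hySph
  obtain ⟨p, hpP, hpK⟩ := hPK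
  rw [hK] at hpK
  refine ⟨p, hpP, ?_, ?_⟩
  · exact mem_iInter₂.mp hpK none (by rw [hFT]; exact Finset.mem_insert_self _ _)
  · intro j hj
    exact mem_iInter₂.mp hpK (some j)
      (by rw [hFT]; exact Finset.mem_insert_of_mem (Finset.mem_image_of_mem some hj))
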